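/- Let k ≥ 2, π a permutation of {1,...,k}, n a positive integer, and b ≥ 1 a real number; set n' = ⌈n/b⌉. For a permutation σ of {1,...,n}, let B_σ be the n'×n' 0-1 matrix (the b-contraction of the permutation matrix A_σ) with B_σ[i][j] = 1 iff there exist i', j' with ⌈i'/b⌉ = i, ⌈j'/b⌉ = j and σ(i') = j'. Then for any fixed n'×n' 0-1 matrix B, the number of permutations σ of {1,...,n} with B_σ = B is at most ⌈b⌉^(2n). -/

import Mathlib

lemma aux_blk_iff {b : ℝ} (hb : 1 ≤ b) (m c : ℕ) :
    ⌈((m : ℝ) + 1) / b⌉₊ = c + 1 ↔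
      ((c : ℝ) * b < (m : ℝ) + 1 ∧ (m : ℝ) + 1 ≤ ((c : ℝ) + 1) * b) := by
  have hb0 : (0:ℝ) < b := lt_of_lt_of_le one_pos hb
  rw [Nat.ceil_eq_iff (Nat.succ_ne_zero c), lt_div_iff₀ hb0, div_le_iff₀ hb0]
  push_cast [Nat.add_sub_cancel]
  constructor <;> intro ⟨h1, h2⟩ <;> constructor <;> linarith

lemma aux_key {b : ℝ} (hb : 1 ≤ b) (m c : ℕ)
    (h1 : (c : ℝ) * b < (m : ℝ) + 1) (h2 : (m : ℝ) + 1 ≤ ((c : ℝ) + 1) * b) :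
    ⌊(c : ℝ) * b⌋₊ ≤ m ∧ m - ⌊(c : ℝ) * b⌋₊ < ⌈b⌉₊ := by
  have hb0 : (0:ℝ) < b := lt_of_lt_of_le one_pos hb
  have h0 : (0:ℝ) ≤ (c : ℝ) * b := by positivity
  have hf : (⌊(c : ℝ) * b⌋₊ : ℝ) ≤ (c : ℝ) * b := Nat.floor_le h0
  have hf2 : (c : ℝ) * b < (⌊(c : ℝ) * b⌋₊ : ℝ) + 1 := Nat.lt_floor_add_one _
  have hbN : b ≤ (⌈b⌉₊ : ℝ) := Nat.le_ceil b
  have hle : ⌊(c : ℝ) * b⌋₊ ≤ m := by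
    have : (⌊(c : ℝ) * b⌋₊ : ℝ) < (m : ℝ) + 1 := by linarith
    exact_mod_cast Nat.lt_add_one_iff.mp (by exact_mod_cast this)
  refine ⟨hle, ?_⟩
  have : (m : ℝ) < (⌊(c : ℝ) * b⌋₊ : ℝ) + (⌈b⌉₊ : ℝ) := by nlinarith
  have hm : m < ⌊(c : ℝ) * b⌋₊ + ⌈b⌉₊ := by exact_mod_cast this
  omega

lemma aux_count {b : ℝ} (hb : 1 ≤ b) (n c : ℕ) :
    (Finset.univ.filter
        (fun m : Fin n => ⌈(((m : ℕ) : ℝ) + 1) / b⌉₊ = c + 1)).card ≤ ⌈b⌉₊ := by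
  classical
  have := Finset.card_le_card_of_injOn (f := fun m : Fin n => (m : ℕ) - ⌊(c : ℝ) * b⌋₊)
    (s := Finset.univ.filter (fun m : Fin n => ⌈(((m : ℕ) : ℝ) + 1) / b⌉₊ = c + 1))
    (t := Finset.range ⌈b⌉₊) ?_ ?_
  · simpa using this
  · intro m hm
    simp only [Finset.mem_coe, Finset.mem_filter, Finset.mem_univ, true_and] at hm
    obtain ⟨h1, h2⟩ := (aux_blk_iff hb m c).mp hm
    simpa using (aux_key hb m c h1 h2).2
  · intro m₁ h₁ m₂ h₂ hEq
    simp only [Finset.coe_filter, Set.mem_setOf_eq, Finset.mem_univ, true_and] at h₁ h₂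
    obtain ⟨g1, g2⟩ := (aux_blk_iff hb m₁ c).mp h₁
    obtain ⟨g3, g4⟩ := (aux_blk_iff hb m₂ c).mp h₂
    have l1 := (aux_key hb m₁ c g1 g2).1
    have l2 := (aux_key hb m₂ c g3 g4).1
    simp only [] at hEq
    have : (m₁ : ℕ) = (m₂ : ℕ) := by omega
    exact Fin.ext this

/-- The (0-based) block index of a 0-based index `m : Fin n`. -/
noncomputable def auxBi {b : ℝ} (hb : 1 ≤ b) {n : ℕ} (m : Fin n) : Fin ⌈(n : ℝ) / b⌉₊ :=
  ⟨⌈(((m : ℕ) : ℝ) + 1) / b⌉₊ - 1, by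
    have hb0 : (0:ℝ) < b := lt_of_lt_of_le one_pos hb
    have h1 : 1 ≤ ⌈(((m : ℕ) : ℝ) + 1) / b⌉₊ :=
      Nat.one_le_ceil_iff.mpr (div_pos (by positivity) hb0)
    have h2 : ⌈(((m : ℕ) : ℝ) + 1) / b⌉₊ ≤ ⌈(n : ℝ) / b⌉₊ := by
      apply Nat.ceil_le_ceil
      gcongr
      exact_mod_cast Nat.succ_le_of_lt m.isLt
    omega⟩

lemma auxBi_spec {b : ℝ} (hb : 1 ≤ b) {n : ℕ} (m : Fin n) :
    ⌈(((m : ℕ) : ℝ) + 1) / b⌉₊ = (auxBi hb m : ℕ) + 1 := by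
  have hb0 : (0:ℝ) < b := lt_of_lt_of_le one_pos hb
  have h1 : 1 ≤ ⌈(((m : ℕ) : ℝ) + 1) / b⌉₊ :=
    Nat.one_le_ceil_iff.mpr (div_pos (by positivity) hb0)
  show _ = ⌈(((m : ℕ) : ℝ) + 1) / b⌉₊ - 1 + 1
  omega

lemma auxBi_key {b : ℝ} (hb : 1 ≤ b) {n : ℕ} (m : Fin n) :
    ⌊((auxBi hb m : ℕ) : ℝ) * b⌋₊ ≤ (m : ℕ) ∧
      (m : ℕ) - ⌊((auxBi hb m : ℕ) : ℝ) * b⌋₊ < ⌈b⌉₊ := by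
  obtain ⟨h1, h2⟩ := (aux_blk_iff hb (m : ℕ) (auxBi hb m : ℕ)).mp (auxBi_spec hb m)
  exact aux_key hb _ _ h1 h2

lemma aux_rank_mono {α : Type*} [LinearOrder α] [DecidableEq α] (s : Finset α) {j₁ j₂ : α}
    (h₁ : j₁ ∈ s) (hlt : j₁ < j₂) :
    (s.filter (fun x => x < j₁)).card < (s.filter (fun x => x < j₂)).card := by
  apply Finset.card_lt_card
  rw [Finset.ssubset_iff_of_subset]
  · exact ⟨j₁, by simp [h₁, hlt], by simp⟩
  · intro x hx
    simp only [Finset.mem_filter] at hx ⊢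
    exact ⟨hx.1, lt_trans hx.2 hlt⟩

lemma aux_rank_inj {α : Type*} [LinearOrder α] [DecidableEq α] (s : Finset α) {j₁ j₂ : α}
    (h₁ : j₁ ∈ s) (h₂ : j₂ ∈ s)
    (h : (s.filter (fun x => x < j₁)).card = (s.filter (fun x => x < j₂)).card) :
    j₁ = j₂ := by
  rcases lt_trichotomy j₁ j₂ with hlt | he | hlt
  · exact absurd h (Nat.ne_of_lt (aux_rank_mono s h₁ hlt))
  · exact he
  · exact absurd h.symm (Nat.ne_of_lt (aux_rank_mono s h₂ hlt))

lemma aux_rank_lt {α : Type*} [LinearOrder α] [DecidableEq α] (s : Finset α) {j : α}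
    (hj : j ∈ s) : (s.filter (fun x => x < j)).card < s.card := by
  apply Finset.card_lt_card
  rw [Finset.ssubset_iff_of_subset (Finset.filter_subset _ _)]
  exact ⟨j, hj, by simp⟩

lemma aux_mem {b : ℝ} (hb : 1 ≤ b) {n : ℕ}
    (B : Fin ⌈(n : ℝ) / b⌉₊ → Fin ⌈(n : ℝ) / b⌉₊ → Bool) (σ : Equiv.Perm (Fin n))
    (hσ : ∀ i j, (B i j = true ↔ ∃ i' : Fin n,
        ⌈(((i' : ℕ) + 1 : ℕ) : ℝ) / b⌉₊ = (i : ℕ) + 1 ∧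
        ⌈(((σ i' : Fin n) : ℕ) + 1 : ℝ) / b⌉₊ = (j : ℕ) + 1))
    (i' : Fin n) : B (auxBi hb i') (auxBi hb (σ i')) = true := by
  refine (hσ _ _).mpr ⟨i', ?_, auxBi_spec hb (σ i')⟩
  rw [show ((((i' : ℕ) + 1 : ℕ)) : ℝ) = (((i' : ℕ) : ℝ) + 1) by push_cast; ring]
  exact auxBi_spec hb i'

lemma aux_row {b : ℝ} (hb : 1 ≤ b) {n : ℕ} (hn : 0 < n)
    (B : Fin ⌈(n : ℝ) / b⌉₊ → Fin ⌈(n : ℝ) / b⌉₊ → Bool) (σ : Equiv.Perm (Fin n))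
    (hσ : ∀ i j, (B i j = true ↔ ∃ i' : Fin n,
        ⌈(((i' : ℕ) + 1 : ℕ) : ℝ) / b⌉₊ = (i : ℕ) + 1 ∧
        ⌈(((σ i' : Fin n) : ℕ) + 1 : ℝ) / b⌉₊ = (j : ℕ) + 1))
    (i : Fin ⌈(n : ℝ) / b⌉₊) :
    (Finset.univ.filter (fun x => B i x = true)).card ≤ ⌈b⌉₊ := by
  classical
  have hex : ∀ j : Fin ⌈(n : ℝ) / b⌉₊, ∃ i' : Fin n, B i j = true →
      (⌈(((i' : ℕ) + 1 : ℕ) : ℝ) / b⌉₊ = (i : ℕ) + 1 ∧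
        ⌈(((σ i' : Fin n) : ℕ) + 1 : ℝ) / b⌉₊ = (j : ℕ) + 1) := by
    intro j
    by_cases h : B i j = true
    · obtain ⟨i', hi'⟩ := (hσ i j).mp h
      exact ⟨i', fun _ => hi'⟩
    · exact ⟨⟨0, hn⟩, fun hc => absurd hc h⟩
  choose w hw using hex
  refine le_trans (Finset.card_le_card_of_injOn (f := w)
    (t := Finset.univ.filter
      (fun m : Fin n => ⌈(((m : ℕ) : ℝ) + 1) / b⌉₊ = (i : ℕ) + 1)) ?_ ?_) ?_
  · intro j hj
    simp only [Finset.mem_coe, Finset.mem_filter, Finset.mem_univ, true_and] at hj ⊢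
    have := (hw j hj).1
    push_cast at this
    exact this
  · intro j₁ hj₁ j₂ hj₂ hEq
    simp only [Finset.coe_filter, Set.mem_setOf_eq, Finset.mem_univ, true_and] at hj₁ hj₂
    have s₁ := (hw j₁ hj₁).2
    have s₂ := (hw j₂ hj₂).2
    rw [hEq, s₂] at s₁
    have : (j₂ : ℕ) = (j₁ : ℕ) := by omega
    exact (Fin.ext this).symm
  · exact aux_count hb n (i : ℕ)

lemma aux_keyA {b : ℝ} (hb : 1 ≤ b) {n : ℕ} (hn : 0 < n)
    (B : Fin ⌈(n : ℝ) / b⌉₊ → Fin ⌈(n : ℝ) / b⌉₊ → Bool) (σ : Equiv.Perm (Fin n))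
    (hσ : ∀ i j, (B i j = true ↔ ∃ i' : Fin n,
        ⌈(((i' : ℕ) + 1 : ℕ) : ℝ) / b⌉₊ = (i : ℕ) + 1 ∧
        ⌈(((σ i' : Fin n) : ℕ) + 1 : ℝ) / b⌉₊ = (j : ℕ) + 1))
    (i' : Fin n) :
    (Finset.univ.filter
        (fun x => B (auxBi hb i') x = true ∧ x < auxBi hb (σ i'))).card < ⌈b⌉₊ := by
  classical
  rw [← Finset.filter_filter]
  refine lt_of_lt_of_le (aux_rank_lt _ ?_) (aux_row hb hn B σ hσ (auxBi hb i'))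
  simp only [Finset.mem_filter, Finset.mem_univ, true_and]
  exact aux_mem hb B σ hσ i'

lemma aux_inj {b : ℝ} (hb : 1 ≤ b) {n : ℕ}
    (B : Fin ⌈(n : ℝ) / b⌉₊ → Fin ⌈(n : ℝ) / b⌉₊ → Bool) (σ τ : Equiv.Perm (Fin n))
    (hσ : ∀ i j, (B i j = true ↔ ∃ i' : Fin n,
        ⌈(((i' : ℕ) + 1 : ℕ) : ℝ) / b⌉₊ = (i : ℕ) + 1 ∧
        ⌈(((σ i' : Fin n) : ℕ) + 1 : ℝ) / b⌉₊ = (j : ℕ) + 1))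
    (hτ : ∀ i j, (B i j = true ↔ ∃ i' : Fin n,
        ⌈(((i' : ℕ) + 1 : ℕ) : ℝ) / b⌉₊ = (i : ℕ) + 1 ∧
        ⌈(((τ i' : Fin n) : ℕ) + 1 : ℝ) / b⌉₊ = (j : ℕ) + 1))
    (h1 : ∀ i' : Fin n,
      (Finset.univ.filter
        (fun x => B (auxBi hb i') x = true ∧ x < auxBi hb (σ i'))).card =
      (Finset.univ.filter
        (fun x => B (auxBi hb i') x = true ∧ x < auxBi hb (τ i'))).card)
    (h2 : ∀ i' : Fin n,
      ((σ i' : Fin n) : ℕ) - ⌊((auxBi hb (σ i') : ℕ) : ℝ) * b⌋₊ =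
      ((τ i' : Fin n) : ℕ) - ⌊((auxBi hb (τ i') : ℕ) : ℝ) * b⌋₊) :
    σ = τ := by
  classical
  apply Equiv.ext
  intro i'
  have hr := h1 i'
  rw [← Finset.filter_filter, ← Finset.filter_filter] at hr
  have hjeq : auxBi hb (σ i') = auxBi hb (τ i') := by
    refine aux_rank_inj _ ?_ ?_ hr
    · simp only [Finset.mem_filter, Finset.mem_univ, true_and]
      exact aux_mem hb B σ hσ i'
    · simp only [Finset.mem_filter, Finset.mem_univ, true_and]
      exact aux_mem hb B τ hτ i'
  have ho := h2 i'
  rw [hjeq] at ho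
  have l1 := (auxBi_key hb (σ i')).1
  have l2 := (auxBi_key hb (τ i')).1
  rw [hjeq] at l1
  have : ((σ i' : Fin n) : ℕ) = ((τ i' : Fin n) : ℕ) := by omega
  exact Fin.ext this

/-- For a real `b ≥ 1` and a fixed `⌈n/b⌉ × ⌈n/b⌉` 0-1 matrix `B`, the number of
permutations `σ` of `{1,…,n}` whose permutation matrix `b`-contracts to `B`
(that is, `B i j = 1` iff some 1-entry `(i', σ(i'))` of `A_σ` satisfies
`⌈i'/b⌉ = i` and `⌈σ(i')/b⌉ = j`, stated here with 1-based indices) is at most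
`⌈b⌉^(2n)`. -/
theorem contraction_fiber_count (k n : ℕ) (hk : 2 ≤ k) (π : Equiv.Perm (Fin k))
    (hn : 0 < n) (b : ℝ) (hb : 1 ≤ b)
    (B : Fin ⌈(n : ℝ) / b⌉₊ → Fin ⌈(n : ℝ) / b⌉₊ → Bool) :
    Nat.card {σ : Equiv.Perm (Fin n) //
      ∀ i j, (B i j = true ↔ ∃ i' : Fin n,
        ⌈(((i' : ℕ) + 1 : ℕ) : ℝ) / b⌉₊ = (i : ℕ) + 1 ∧
        ⌈(((σ i' : Fin n) : ℕ) + 1 : ℝ) / b⌉₊ = (j : ℕ) + 1)} ≤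
      ⌈b⌉₊ ^ (2 * n) := by
  classical
  have hcard : Nat.card (Fin n → Fin ⌈b⌉₊ × Fin ⌈b⌉₊) = ⌈b⌉₊ ^ (2 * n) := by
    simp [Nat.card_eq_fintype_card]
    ring
  rw [← hcard]
  apply Nat.card_le_card_of_injective
    (f := fun σp : {σ : Equiv.Perm (Fin n) //
      ∀ i j, (B i j = true ↔ ∃ i' : Fin n,
        ⌈(((i' : ℕ) + 1 : ℕ) : ℝ) / b⌉₊ = (i : ℕ) + 1 ∧
        ⌈(((σ i' : Fin n) : ℕ) + 1 : ℝ) / b⌉₊ = (j : ℕ) + 1)} =>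
      fun i' : Fin n =>
        ((⟨_, aux_keyA hb hn B σp.1 σp.2 i'⟩ : Fin ⌈b⌉₊),
         (⟨_, (auxBi_key hb (σp.1 i')).2⟩ : Fin ⌈b⌉₊)))
  intro σp τp h
  apply Subtype.ext
  apply aux_inj hb B σp.1 τp.1 σp.2 τp.2
  · intro i'
    exact congrArg Fin.val (congrArg Prod.fst (congrFun h i'))
  · intro i'
    exact congrArg Fin.val (congrArg Prod.snd (congrFun h i'))
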